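/- For a fixed input ζ_x ∈ ℝ^{ℓ₀} with S = ‖ζ_x‖, the gradient of the first-layer map N₁(Θ₁) = σ₁(A^{(1)}ζ_x + b^{(1)}) with respect to the flattened parameters Θ₁ = (A^{(1)}, b^{(1)}) is Lipschitz continuous with constant L_{∇N₁} = σ″_max·√((S² + 1)(3S² + 2)). -/

import Mathlib

open scoped BigOperators

/-- Frobenius-type norm of a vector. -/
noncomputable def vnorm {n : ℕ} (v : Fin n → ℝ) : ℝ := Real.sqrt (∑ i, (v i) ^ 2)

/-- Frobenius-type norm of a matrix. -/
noncomputable def mnorm {m n : ℕ} (A : Fin m → Fin n → ℝ) : ℝ :=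
  Real.sqrt (∑ i, ∑ j, (A i j) ^ 2)

/-- Partial derivative (∂/∂A_{ij}) of the first-layer map N₁(A,b) = σ(Aζ + b):
equals σ′(A_{i,·}ζ + b_i)·ζ_j·e_i; indexed by output component `k`. -/
noncomputable def gradLayer1A {ℓ₀ ℓ₁ : ℕ} (σ : ℝ → ℝ) (ζ : Fin ℓ₀ → ℝ)
    (A : Fin ℓ₁ → Fin ℓ₀ → ℝ) (b : Fin ℓ₁ → ℝ) : Fin ℓ₁ → Fin ℓ₁ → Fin ℓ₀ → ℝ :=
  fun k i j => if k = i then deriv σ (∑ j', A i j' * ζ j' + b i) * ζ j else 0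

/-- Partial derivative (∂/∂b_i) of the first-layer map N₁(A,b) = σ(Aζ + b):
equals σ′(A_{i,·}ζ + b_i)·e_i; indexed by output component `k`. -/
noncomputable def gradLayer1b {ℓ₀ ℓ₁ : ℕ} (σ : ℝ → ℝ) (ζ : Fin ℓ₀ → ℝ)
    (A : Fin ℓ₁ → Fin ℓ₀ → ℝ) (b : Fin ℓ₁ → ℝ) : Fin ℓ₁ → Fin ℓ₁ → ℝ :=
  fun k i => if k = i then deriv σ (∑ j', A i j' * ζ j' + b i) else 0

/-- the gradient of the first-layer map N₁ with respect to Θ₁ = (A, b) is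
Lipschitz continuous with constant σ″_max·√((S² + 1)(3S² + 2)), where S = ‖ζ_x‖. -/
theorem statement6 {ℓ₀ ℓ₁ : ℕ} (σ : ℝ → ℝ) (σmax σ'max σ''max : ℝ)
    (hσd : Differentiable ℝ σ) (hσd2 : Differentiable ℝ (deriv σ))
    (hσb : ∀ x, |σ x| ≤ σmax) (hσ' : ∀ x, |deriv σ x| ≤ σ'max)
    (hσ'' : ∀ x, |deriv (deriv σ) x| ≤ σ''max)
    (ζ : Fin ℓ₀ → ℝ) :
    ∀ (A A' : Fin ℓ₁ → Fin ℓ₀ → ℝ) (b b' : Fin ℓ₁ → ℝ),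
      Real.sqrt
        ((∑ k, ∑ i, ∑ j, (gradLayer1A σ ζ A b k i j - gradLayer1A σ ζ A' b' k i j) ^ 2)
          + (∑ k, ∑ i, (gradLayer1b σ ζ A b k i - gradLayer1b σ ζ A' b' k i) ^ 2))
        ≤ σ''max * Real.sqrt (((vnorm ζ) ^ 2 + 1) * (3 * (vnorm ζ) ^ 2 + 2)) *
          Real.sqrt ((mnorm (A - A')) ^ 2 + (vnorm (b - b')) ^ 2) := by
  intro A A' b b'
  have h0 : 0 ≤ σ''max := (abs_nonneg _).trans (hσ'' 0)
  -- Lipschitz property of deriv σ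
  have hlip : ∀ x y : ℝ, |deriv σ x - deriv σ y| ≤ σ''max * |x - y| := by
    have hl : LipschitzWith ⟨σ''max, h0⟩ (deriv σ) := by
      apply lipschitzWith_of_nnnorm_deriv_le hσd2
      intro x
      show (‖deriv (deriv σ) x‖₊ : ℝ) ≤ σ''max
      simpa using hσ'' x
    intro x y
    have h := hl.dist_le_mul x y
    rw [Real.dist_eq, Real.dist_eq] at h
    exact h
  set S2 : ℝ := ∑ j, (ζ j) ^ 2 with hS2def
  have hS2 : 0 ≤ S2 := Finset.sum_nonneg fun _ _ => sq_nonneg _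
  set u : Fin ℓ₁ → ℝ := fun i => ∑ j', A i j' * ζ j' + b i with hu
  set u' : Fin ℓ₁ → ℝ := fun i => ∑ j', A' i j' * ζ j' + b' i with hu'
  set dd : Fin ℓ₁ → ℝ := fun i => deriv σ (u i) - deriv σ (u' i) with hdd
  set P : Fin ℓ₁ → ℝ := fun i => (∑ j, (A i j - A' i j) ^ 2) + (b i - b' i) ^ 2 with hP
  set D2 : ℝ := ∑ i, P i with hD2def
  have hD2 : 0 ≤ D2 := Finset.sum_nonneg fun i _ =>
    add_nonneg (Finset.sum_nonneg fun _ _ => sq_nonneg _) (sq_nonneg _)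
  -- simplify LHS argument
  have hLHS : (∑ k, ∑ i, ∑ j, (gradLayer1A σ ζ A b k i j - gradLayer1A σ ζ A' b' k i j) ^ 2)
          + (∑ k, ∑ i, (gradLayer1b σ ζ A b k i - gradLayer1b σ ζ A' b' k i) ^ 2)
      = ∑ i, (dd i) ^ 2 * (S2 + 1) := by
    have h1 : ∀ k : Fin ℓ₁,
        (∑ i, ∑ j, (gradLayer1A σ ζ A b k i j - gradLayer1A σ ζ A' b' k i j) ^ 2)
        = (dd k) ^ 2 * S2 := by
      intro k
      simp only [gradLayer1A, ← ite_sub_ite, sub_zero]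
      rw [Finset.sum_eq_single k]
      · simp only [if_pos rfl, if_true, hS2def, Finset.mul_sum]
        apply Finset.sum_congr rfl
        intro x _
        simp only [hdd, hu, hu']
        ring
      · intro i _ hik
        simp [Ne.symm hik]
      · simp
    have h2 : ∀ k : Fin ℓ₁,
        (∑ i, (gradLayer1b σ ζ A b k i - gradLayer1b σ ζ A' b' k i) ^ 2) = (dd k) ^ 2 := by
      intro k
      simp only [gradLayer1b, ← ite_sub_ite, sub_zero]
      rw [Finset.sum_eq_single k]
      · simp only [if_pos rfl, if_true, hdd, hu, hu']
      · intro i _ hik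
        simp [Ne.symm hik]
      · simp
    simp only [Finset.sum_congr rfl fun k _ => h1 k, Finset.sum_congr rfl fun k _ => h2 k]
    rw [← Finset.sum_add_distrib]
    apply Finset.sum_congr rfl
    intro k _
    ring
  rw [hLHS]
  -- per-index bound
  have hbound : ∀ i : Fin ℓ₁, (dd i) ^ 2 ≤ σ''max ^ 2 * ((S2 + 1) * P i) := by
    intro i
    have hdiff : u i - u' i = (b i - b' i) + ∑ j, (A i j - A' i j) * ζ j := by
      simp only [hu, hu', Finset.sum_sub_distrib, sub_mul]
      ring
    have hcs : (u i - u' i) ^ 2 ≤ P i * (1 + S2) := by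
      rw [hdiff]
      have := Finset.sum_mul_sq_le_sq_mul_sq (Finset.univ : Finset (Option (Fin ℓ₀)))
        (fun o => Option.elim o (b i - b' i) (fun j => A i j - A' i j))
        (fun o => Option.elim o 1 (fun j => ζ j))
      simpa [Fintype.sum_option, hP, add_comm, ← hS2def] using this
    have h1 : |dd i| ≤ σ''max * |u i - u' i| := hlip _ _
    calc (dd i) ^ 2 = |dd i| ^ 2 := (sq_abs _).symm
      _ ≤ (σ''max * |u i - u' i|) ^ 2 := by
          apply pow_le_pow_left₀ (abs_nonneg _) h1
      _ = σ''max ^ 2 * (u i - u' i) ^ 2 := by rw [mul_pow, sq_abs]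
      _ ≤ σ''max ^ 2 * (P i * (1 + S2)) := by
          exact mul_le_mul_of_nonneg_left hcs (sq_nonneg _)
      _ = σ''max ^ 2 * ((S2 + 1) * P i) := by ring
  -- combine
  have hsum : ∑ i, (dd i) ^ 2 * (S2 + 1) ≤ σ''max ^ 2 * ((S2 + 1) * (3 * S2 + 2)) * D2 := by
    calc ∑ i, (dd i) ^ 2 * (S2 + 1)
        ≤ ∑ i, σ''max ^ 2 * ((S2 + 1) * P i) * (S2 + 1) := by
          apply Finset.sum_le_sum
          intro i _
          exact mul_le_mul_of_nonneg_right (hbound i) (by linarith)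
      _ = σ''max ^ 2 * ((S2 + 1) * (S2 + 1)) * D2 := by
          rw [hD2def, Finset.mul_sum]
          apply Finset.sum_congr rfl
          intro i _
          ring
      _ ≤ σ''max ^ 2 * ((S2 + 1) * (3 * S2 + 2)) * D2 := by
          apply mul_le_mul_of_nonneg_right _ hD2
          apply mul_le_mul_of_nonneg_left _ (sq_nonneg _)
          apply mul_le_mul_of_nonneg_left (by linarith) (by linarith)
  have hv2 : (vnorm ζ) ^ 2 = S2 := Real.sq_sqrt (Finset.sum_nonneg fun _ _ => sq_nonneg _)
  have hm2 : (mnorm (A - A')) ^ 2 + (vnorm (b - b')) ^ 2 = D2 := by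
    rw [show (mnorm (A - A')) ^ 2 = ∑ i, ∑ j, ((A - A') i j) ^ 2 from
        Real.sq_sqrt (Finset.sum_nonneg fun _ _ => Finset.sum_nonneg fun _ _ => sq_nonneg _),
      show (vnorm (b - b')) ^ 2 = ∑ i, ((b - b') i) ^ 2 from
        Real.sq_sqrt (Finset.sum_nonneg fun _ _ => sq_nonneg _)]
    simp only [Pi.sub_apply, hD2def, hP]
    rw [← Finset.sum_add_distrib]
  rw [hv2, hm2]
  have hrhs : Real.sqrt (σ''max ^ 2 * ((S2 + 1) * (3 * S2 + 2)) * D2)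
      = σ''max * Real.sqrt ((S2 + 1) * (3 * S2 + 2)) * Real.sqrt D2 := by
    rw [Real.sqrt_mul (mul_nonneg (sq_nonneg _)
        (by positivity : (0:ℝ) ≤ (S2 + 1) * (3 * S2 + 2))) D2,
      Real.sqrt_mul (sq_nonneg σ''max) ((S2 + 1) * (3 * S2 + 2)), Real.sqrt_sq h0]
  calc Real.sqrt (∑ i, (dd i) ^ 2 * (S2 + 1))
      ≤ Real.sqrt (σ''max ^ 2 * ((S2 + 1) * (3 * S2 + 2)) * D2) := Real.sqrt_le_sqrt hsum
    _ = _ := hrhs
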